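/- For every odd positive integer n ≥ 3 with n ≡ 0 (mod 3) such that 2n−1 is prime, the labeling of GP(n,1) given by v_i ↦ i for 1 ≤ i ≤ n−1, v_n ↦ 2n−1, u_i ↦ 2n−1−i for 1 ≤ i ≤ n−1, and u_n ↦ 2n+1, is injective with values in {1,...,2n+1} and assigns coprime labels to every pair of adjacent vertices. -/
import Mathlib


/-- The prism graph `GP(n,1)`: two `n`-cycles `v` (inl) and `u` (inr) joined by a
perfect matching. -/
def prismGraph (n : ℕ) : SimpleGraph (ZMod n ⊕ ZMod n) :=
  SimpleGraph.fromRel (fun x y =>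
    (∃ i : ZMod n, x = Sum.inl i ∧ y = Sum.inl (i + 1)) ∨
    (∃ i : ZMod n, x = Sum.inr i ∧ y = Sum.inr (i + 1)) ∨
    (∃ i : ZMod n, x = Sum.inl i ∧ y = Sum.inr i))

/-- The labeling of Theorem (2n-1 prime, n ≡ 0 mod 3): `v_i ↦ i` for `i ≤ n-1`,
`v_n ↦ 2n-1`; `u_i ↦ 2n-1-i` for `i ≤ n-1`, `u_n ↦ 2n+1`
(vertex of value `j` represents index `j+1`). -/
def prismLabel18 (n : ℕ) : ZMod n ⊕ ZMod n → ℕ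
  | Sum.inl i => if i.val = n - 1 then 2 * n - 1 else i.val + 1
  | Sum.inr i => if i.val = n - 1 then 2 * n + 1 else 2 * n - 1 - (i.val + 1)

theorem prism_coprime_labeling_of_twoNSubOne_prime (n : ℕ) (hn : 3 ≤ n)
    (hodd : Odd n) (h3 : n % 3 = 0) (hp : Nat.Prime (2 * n - 1)) :
    Function.Injective (prismLabel18 n) ∧
    (∀ x, prismLabel18 n x ∈ Finset.Icc 1 (2 * n + 1)) ∧
    (∀ x y, (prismGraph n).Adj x y →
      Nat.Coprime (prismLabel18 n x) (prismLabel18 n y)) := by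
  haveI : NeZero n := ⟨by omega⟩
  haveI : Fact (1 < n) := ⟨by omega⟩
  have hv : ∀ i : ZMod n, i.val < n := fun i => ZMod.val_lt i
  have hsucc : ∀ i : ZMod n, (i + 1).val = (i.val + 1) % n := fun i => by
    rw [ZMod.val_add, ZMod.val_one]
  have copd : ∀ a b : ℕ, (∀ d, d ∣ a → d ∣ b → d = 1) → Nat.Coprime a b :=
    fun a b h => h _ (Nat.gcd_dvd_left a b) (Nat.gcd_dvd_right a b)
  refine ⟨?_, ?_, ?_⟩
  · rintro (i | i) (j | j) h <;> simp only [prismLabel18] at h <;>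
      have hi := hv i <;> have hj := hv j
    · have : i.val = j.val := by split_ifs at h <;> omega
      exact congrArg Sum.inl (ZMod.val_injective n this)
    · exfalso; split_ifs at h <;> omega
    · exfalso; split_ifs at h <;> omega
    · have : i.val = j.val := by split_ifs at h <;> omega
      exact congrArg Sum.inr (ZMod.val_injective n this)
  · rintro (i | i) <;> simp only [prismLabel18] <;> split_ifs <;>
      simp only [Finset.mem_Icc] <;> (have := hv i; omega)
  · have key : ∀ x y, ((∃ i : ZMod n, x = Sum.inl i ∧ y = Sum.inl (i + 1)) ∨
        (∃ i : ZMod n, x = Sum.inr i ∧ y = Sum.inr (i + 1)) ∨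
        (∃ i : ZMod n, x = Sum.inl i ∧ y = Sum.inr i)) →
        Nat.Coprime (prismLabel18 n x) (prismLabel18 n y) := by
      rintro x y (⟨i, rfl, rfl⟩ | ⟨i, rfl, rfl⟩ | ⟨i, rfl, rfl⟩)
      · -- v_i -- v_{i+1}
        rcases eq_or_ne i.val (n - 1) with h1 | h1
        · have h2 : (i + 1).val = 0 := by
            rw [hsucc, h1]
            have : n - 1 + 1 = n := by omega
            rw [this, Nat.mod_self]
          simp only [prismLabel18, h1, h2, if_true, if_neg (by omega : ¬ (0 : ℕ) = n - 1)]
          exact Nat.coprime_one_right _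
        · have h2 : (i + 1).val = i.val + 1 :=
            (hsucc i).trans (Nat.mod_eq_of_lt (by have := hv i; omega))
          rcases eq_or_ne (i.val + 1) (n - 1) with h3 | h3
          · simp only [prismLabel18, h1, h2, h3, if_true, if_false, if_neg h1]
            -- Coprime (i.val+1) (2n-1), with i.val+1 = n-1
            refine copd _ _ fun d hda hdb => ?_
            have h2d : d ∣ 2 * (n - 1) := hda.mul_left 2
            have := Nat.dvd_sub hdb h2d
            have e : 2 * n - 1 - 2 * (n - 1) = 1 := by omega
            rw [e] at this
            exact Nat.dvd_one.mp this
          · simp only [prismLabel18, if_neg h1, h2, if_neg h3]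
            simp
      · -- u_i -- u_{i+1}
        rcases eq_or_ne i.val (n - 1) with h1 | h1
        · have h2 : (i + 1).val = 0 := by
            rw [hsucc, h1]
            have : n - 1 + 1 = n := by omega
            rw [this, Nat.mod_self]
          simp only [prismLabel18, h1, h2, if_true, if_neg (by omega : ¬ (0 : ℕ) = n - 1)]
          -- Coprime (2n+1) (2n-1-1)
          refine copd _ _ fun d hda hdb => ?_
          have := Nat.dvd_sub hda hdb
          have e : 2 * n + 1 - (2 * n - 1 - (0 + 1)) = 3 := by omega
          rw [e] at this
          rcases (Nat.prime_three.eq_one_or_self_of_dvd d this) with h | h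
          · exact h
          · subst h
            exfalso
            have : (3 : ℕ) ∣ 2 * n + 1 := hda
            omega
        · have h2 : (i + 1).val = i.val + 1 :=
            (hsucc i).trans (Nat.mod_eq_of_lt (by have := hv i; omega))
          rcases eq_or_ne (i.val + 1) (n - 1) with h3 | h3
          · simp only [prismLabel18, if_neg h1, h2, h3, if_true]
            -- Coprime (2n-1-(i.val+1)) (2n+1), with i.val+1 = n-1, so first is n
            refine copd _ _ fun d hda hdb => ?_
            have hda' : d ∣ n := by
              have e : 2 * n - 1 - (n - 1) = n := by omega
              rwa [e] at hda
            have h2d : d ∣ 2 * n := hda'.mul_left 2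
            have := Nat.dvd_sub hdb h2d
            have e : 2 * n + 1 - 2 * n = 1 := by omega
            rw [e] at this
            exact Nat.dvd_one.mp this
          · simp only [prismLabel18, if_neg h1, h2, if_neg h3]
            -- Coprime (2n-1-(i.val+1)) (2n-1-(i.val+2)) : consecutive
            have hi := hv i
            have e : 2 * n - 1 - (i.val + 1) = (2 * n - 1 - (i.val + 1 + 1)) + 1 := by omega
            rw [e]
            simp
      · -- v_i -- u_i
        rcases eq_or_ne i.val (n - 1) with h1 | h1
        · simp only [prismLabel18, h1, if_true]
          -- Coprime (2n-1) (2n+1)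
          refine copd _ _ fun d hda hdb => ?_
          have := Nat.dvd_sub hdb hda
          have e : 2 * n + 1 - (2 * n - 1) = 2 := by omega
          rw [e] at this
          rcases (Nat.prime_two.eq_one_or_self_of_dvd d this) with h | h
          · exact h
          · subst h
            exfalso
            have : (2 : ℕ) ∣ 2 * n - 1 := hda
            omega
        · simp only [prismLabel18, if_neg h1]
          -- Coprime (i.val+1) (2n-1-(i.val+1)); sum is 2n-1 prime
          refine copd _ _ fun d hda hdb => ?_
          have hi := hv i
          have hsum : d ∣ 2 * n - 1 := by
            have := Nat.dvd_add hda hdb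
            have e : i.val + 1 + (2 * n - 1 - (i.val + 1)) = 2 * n - 1 := by omega
            rwa [e] at this
          rcases (hp.eq_one_or_self_of_dvd d hsum) with h | h
          · exact h
          · subst h
            exfalso
            have hle := Nat.le_of_dvd (by omega) hda
            omega
    intro x y hadj
    rw [prismGraph, SimpleGraph.fromRel_adj] at hadj
    rcases hadj.2 with h | h
    · exact key x y h
    · exact (key y x h).symm
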